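/- If an LTL specification φ is (V, H, C, G)-realizable by some TGE with memory set M, then it is (V, H, C, G)-realizable by a TGE (with the same state space and memory set) that uses only programs tight for φ, i.e., programs p : M × 2^H → M × 2^G satisfying p(m, h) = p(m, h') whenever the hidden assignments h and h' agree on all formulas in cl_H(φ). -/

import Mathlib

/-- LTL formulas over atomic propositions of type `α`. -/
inductive LTL (α : Type) : Type where
  | tt : LTL α
  | ff : LTL α
  | atom : α → LTL α
  | not : LTL α → LTL α
  | and : LTL α → LTL α → LTL α
  | or : LTL α → LTL α → LTL α
  | next : LTL α → LTL α
  | untl : LTL α → LTL α → LTL α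

namespace LTL

variable {α β : Type}

/-- Satisfaction of an LTL formula at position `j` of an infinite word. -/
def satAt (w : ℕ → Set α) : ℕ → LTL α → Prop
  | _, .tt => True
  | _, .ff => False
  | j, .atom a => a ∈ w j
  | j, .not φ => ¬ satAt w j φ
  | j, .and φ ψ => satAt w j φ ∧ satAt w j ψ
  | j, .or φ ψ => satAt w j φ ∨ satAt w j ψ
  | j, .next φ => satAt w (j+1) φ
  | j, .untl φ ψ => ∃ k, j ≤ k ∧ satAt w k ψ ∧ ∀ l, j ≤ l → l < k → satAt w l φ

/-- A word satisfies a formula if it satisfies it at position 0. -/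
def sat (w : ℕ → Set α) (φ : LTL α) : Prop := satAt w 0 φ

/-- Eventually. -/
def F (φ : LTL α) : LTL α := untl tt φ
/-- Always. -/
def G (φ : LTL α) : LTL α := not (F (not φ))
/-- Boolean equivalence. -/
def iff_ (φ ψ : LTL α) : LTL α := or (and φ ψ) (and (not φ) (not ψ))
/-- `Xpow k φ` is `X^k φ`. -/
def Xpow : ℕ → LTL α → LTL α
  | 0, φ => φ
  | k+1, φ => next (Xpow k φ)
/-- `Fpow k φ` is `F^{k+1} φ`: "`φ` holds in at least `k+1` positions".
    (`F^1 p = F p`, `F^{j+1} p = F (p ∧ X (F^j p))`.) -/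
def Fpow : ℕ → LTL α → LTL α
  | 0, φ => F φ
  | k+1, φ => F (and φ (next (Fpow k φ)))

/-- Relabeling of atoms. -/
def map (f : α → β) : LTL α → LTL β
  | .tt => .tt
  | .ff => .ff
  | .atom a => .atom (f a)
  | .not φ => .not (map f φ)
  | .and φ ψ => .and (map f φ) (map f ψ)
  | .or φ ψ => .or (map f φ) (map f ψ)
  | .next φ => .next (map f φ)
  | .untl φ ψ => .untl (map f φ) (map f ψ)

/-- A formula is temporal-operator free (propositional). -/
def temporalFree : LTL α → Bool
  | .tt => true
  | .ff => true
  | .atom _ => true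
  | .not φ => temporalFree φ
  | .and φ ψ => temporalFree φ && temporalFree ψ
  | .or φ ψ => temporalFree φ && temporalFree ψ
  | .next _ => false
  | .untl _ _ => false

/-- `props ψ`: the maximal propositional subformulas of `ψ`. -/
def props : LTL α → List (LTL α)
  | .tt => [.tt]
  | .ff => [.ff]
  | .atom a => [.atom a]
  | .not φ => if temporalFree (LTL.not φ) then [.not φ] else props φ
  | .and φ ψ => if temporalFree (LTL.and φ ψ) then [.and φ ψ] else props φ ++ props ψ
  | .or φ ψ => if temporalFree (LTL.or φ ψ) then [.or φ ψ] else props φ ++ props ψ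
  | .next φ => props φ
  | .untl φ ψ => props φ ++ props ψ

/-- All atoms of the formula satisfy predicate `p`. -/
def atomsAll (p : α → Bool) : LTL α → Bool
  | .tt => true
  | .ff => true
  | .atom a => p a
  | .not φ => atomsAll p φ
  | .and φ ψ => atomsAll p φ && atomsAll p ψ
  | .or φ ψ => atomsAll p φ && atomsAll p ψ
  | .next φ => atomsAll p φ
  | .untl φ ψ => atomsAll p φ && atomsAll p ψ

/-- Maximal subformulas all of whose atoms satisfy `p` (used for `cl_H`). -/
def clP (p : α → Bool) : LTL α → List (LTL α)
  | .tt => []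
  | .ff => []
  | .atom a => if p a then [.atom a] else []
  | .not φ => if atomsAll p (LTL.not φ) then [.not φ] else clP p φ
  | .and φ ψ => if atomsAll p (LTL.and φ ψ) then [.and φ ψ] else clP p φ ++ clP p ψ
  | .or φ ψ => if atomsAll p (LTL.or φ ψ) then [.or φ ψ] else clP p φ ++ clP p ψ
  | .next φ => clP p φ
  | .untl φ ψ => clP p φ ++ clP p ψ

/-- `clH p φ`: maximal subformulas of formulas in `props φ` all of whose atoms
    satisfy `p` (i.e. are hidden signals). -/
def clH (p : α → Bool) (φ : LTL α) : List (LTL α) :=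
  (props φ).foldr (fun ψ acc => clP p ψ ++ acc) []

/-- Propositional satisfaction of a formula by a single assignment. -/
def propSat (σ : Set α) (φ : LTL α) : Prop := satAt (fun _ => σ) 0 φ

end LTL

/-- A (full-visibility) finite-state transducer with inputs `ι`, outputs `o`
    and states `S`. -/
structure Transducer (ι o S : Type) where
  init : S
  trans : S → Set ι → S
  out : S → Set ι → Set o

namespace Transducer

variable {ι o S : Type}

/-- The run of a transducer on an input word. -/
def run (T : Transducer ι o S) (wI : ℕ → Set ι) : ℕ → S
  | 0 => T.init
  | j+1 => T.trans (run T wI j) (wI j)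

/-- The computation of a transducer on an input word, as a word over `2^{I ∪ O}`. -/
def comp (T : Transducer ι o S) (wI : ℕ → Set ι) (j : ℕ) : Set (ι ⊕ o) :=
  Sum.inl '' wI j ∪ Sum.inr '' T.out (T.run wI j) (wI j)

/-- `(I,O)`-realizability. -/
def Realizes (T : Transducer ι o S) (φ : LTL (ι ⊕ o)) : Prop :=
  ∀ wI, LTL.sat (T.comp wI) φ

end Transducer

/-- A transducer with a guided environment (TGE): visible inputs `ν`, hidden
    inputs `η`, controlled outputs `γc`, guided outputs `γg`, states `S`,
    environment memory `M`.  Each transition emits an assignment to the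
    controlled outputs together with a program `M × 2^H → M × 2^G`. -/
structure TGE (ν η γc γg S M : Type) where
  init : S
  m0 : M
  trans : S → Set ν → S
  out : S → Set ν → Set γc × (M → Set η → M × Set γg)

namespace TGE

variable {ν η γc γg S M : Type}

/-- The run of a TGE depends only on the visible inputs. -/
def run (T : TGE ν η γc γg S M) (wV : ℕ → Set ν) : ℕ → S
  | 0 => T.init
  | j+1 => T.trans (run T wV j) (wV j)

/-- The environment's memory sequence, obtained by iterating the emitted
    programs on the hidden inputs. -/
def mem (T : TGE ν η γc γg S M) (wV : ℕ → Set ν) (wH : ℕ → Set η) : ℕ → M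
  | 0 => T.m0
  | j+1 => ((T.out (T.run wV j) (wV j)).2 (mem T wV wH j) (wH j)).1

/-- The guided output at step `j`. -/
def guided (T : TGE ν η γc γg S M) (wV : ℕ → Set ν) (wH : ℕ → Set η) (j : ℕ) :
    Set γg :=
  ((T.out (T.run wV j) (wV j)).2 (T.mem wV wH j) (wH j)).2

/-- The computation of a TGE, over `2^{(V ∪ H) ∪ (C ∪ G)}`. -/
def comp (T : TGE ν η γc γg S M) (wV : ℕ → Set ν) (wH : ℕ → Set η) (j : ℕ) :
    Set ((ν ⊕ η) ⊕ (γc ⊕ γg)) :=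
  Sum.inl '' (Sum.inl '' wV j ∪ Sum.inr '' wH j) ∪
    Sum.inr '' (Sum.inl '' (T.out (T.run wV j) (wV j)).1 ∪
                 Sum.inr '' T.guided wV wH j)

/-- `(V,H,C,G)`-realizability of an LTL specification. -/
def Realizes (T : TGE ν η γc γg S M) (φ : LTL ((ν ⊕ η) ⊕ (γc ⊕ γg))) : Prop :=
  ∀ wV wH, LTL.sat (T.comp wV wH) φ

/-- `(V,H,C,G)`-realizability of an arbitrary language. -/
def RealizesL (T : TGE ν η γc γg S M)
    (L : Set (ℕ → Set ((ν ⊕ η) ⊕ (γc ⊕ γg)))) : Prop :=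
  ∀ wV wH, T.comp wV wH ∈ L

end TGE

/-- Which atoms are hidden input signals. -/
def isHidden {ν η γc γg : Type} : (ν ⊕ η) ⊕ (γc ⊕ γg) → Bool
  | Sum.inl (Sum.inr _) => true
  | _ => false

/-- The letter induced by a hidden assignment `h ∈ 2^H`. -/
def hLetter {ν η γc γg : Type} (h : Set η) : Set ((ν ⊕ η) ⊕ (γc ⊕ γg)) :=
  Sum.inl '' (Sum.inr '' h)

section Aux

variable {α : Type}

lemma satAt_of_temporalFree (w : ℕ → Set α) :
    ∀ (θ : LTL α), θ.temporalFree → ∀ j, (LTL.satAt w j θ ↔ LTL.propSat (w j) θ)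
  | .tt, _, _ => by simp [LTL.satAt, LTL.propSat]
  | .ff, _, _ => by simp [LTL.satAt, LTL.propSat]
  | .atom a, _, j => by simp [LTL.satAt, LTL.propSat]
  | .not θ, hT, j => by
    simp only [LTL.temporalFree] at hT
    simp [LTL.satAt, LTL.propSat, satAt_of_temporalFree w θ hT j,
      LTL.propSat] at *
  | .and θ ψ, hT, j => by
    simp only [LTL.temporalFree, Bool.and_eq_true] at hT
    simp [LTL.satAt, LTL.propSat, satAt_of_temporalFree w θ hT.1 j,
      satAt_of_temporalFree w ψ hT.2 j, LTL.propSat]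
  | .or θ ψ, hT, j => by
    simp only [LTL.temporalFree, Bool.and_eq_true] at hT
    simp [LTL.satAt, LTL.propSat, satAt_of_temporalFree w θ hT.1 j,
      satAt_of_temporalFree w ψ hT.2 j, LTL.propSat]

lemma props_temporalFree : ∀ (φ : LTL α), ∀ θ ∈ φ.props, θ.temporalFree
  | .tt, θ, hθ => by simp [LTL.props] at hθ; simp [hθ, LTL.temporalFree]
  | .ff, θ, hθ => by simp [LTL.props] at hθ; simp [hθ, LTL.temporalFree]
  | .atom a, θ, hθ => by simp [LTL.props] at hθ; simp [hθ, LTL.temporalFree]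
  | .not φ, θ, hθ => by
    by_cases hc : LTL.temporalFree (LTL.not φ) = true
    · simp [LTL.props, hc] at hθ; subst hθ; exact hc
    · exact props_temporalFree φ θ (by simpa [LTL.props, hc] using hθ)
  | .and φ ψ, θ, hθ => by
    by_cases hc : LTL.temporalFree (LTL.and φ ψ) = true
    · simp [LTL.props, hc] at hθ; subst hθ; exact hc
    · simp [LTL.props, hc] at hθ
      rcases hθ with h' | h'
      · exact props_temporalFree φ θ h'
      · exact props_temporalFree ψ θ h'
  | .or φ ψ, θ, hθ => by
    by_cases hc : LTL.temporalFree (LTL.or φ ψ) = true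
    · simp [LTL.props, hc] at hθ; subst hθ; exact hc
    · simp [LTL.props, hc] at hθ
      rcases hθ with h' | h'
      · exact props_temporalFree φ θ h'
      · exact props_temporalFree ψ θ h'
  | .next φ, θ, hθ => props_temporalFree φ θ hθ
  | .untl φ ψ, θ, hθ => by
    rcases List.mem_append.1 hθ with h' | h'
    · exact props_temporalFree φ θ h'
    · exact props_temporalFree ψ θ h'

lemma clP_spec (p : α → Bool) :
    ∀ (θ : LTL α), θ.temporalFree → ∀ ζ ∈ LTL.clP p θ,
      ζ.temporalFree ∧ LTL.atomsAll p ζ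
  | .tt, _, ζ, hζ => by simp [LTL.clP] at hζ
  | .ff, _, ζ, hζ => by simp [LTL.clP] at hζ
  | .atom a, _, ζ, hζ => by
    by_cases hc : p a = true
    · simp [LTL.clP, hc] at hζ; subst hζ
      exact ⟨rfl, hc⟩
    · simp [LTL.clP, hc] at hζ
  | .not θ, hT, ζ, hζ => by
    simp only [LTL.temporalFree] at hT
    by_cases hc : LTL.atomsAll p (LTL.not θ) = true
    · simp [LTL.clP, hc] at hζ; subst hζ
      exact ⟨hT, hc⟩
    · exact clP_spec p θ hT ζ (by simpa [LTL.clP, hc] using hζ)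
  | .and θ ψ, hT, ζ, hζ => by
    simp only [LTL.temporalFree, Bool.and_eq_true] at hT
    by_cases hc : LTL.atomsAll p (LTL.and θ ψ) = true
    · simp [LTL.clP, hc] at hζ; subst hζ
      exact ⟨by simp [LTL.temporalFree, hT.1, hT.2], hc⟩
    · simp [LTL.clP, hc] at hζ
      rcases hζ with h' | h'
      · exact clP_spec p θ hT.1 ζ h'
      · exact clP_spec p ψ hT.2 ζ h'
  | .or θ ψ, hT, ζ, hζ => by
    simp only [LTL.temporalFree, Bool.and_eq_true] at hT
    by_cases hc : LTL.atomsAll p (LTL.or θ ψ) = true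
    · simp [LTL.clP, hc] at hζ; subst hζ
      exact ⟨by simp [LTL.temporalFree, hT.1, hT.2], hc⟩
    · simp [LTL.clP, hc] at hζ
      rcases hζ with h' | h'
      · exact clP_spec p θ hT.1 ζ h'
      · exact clP_spec p ψ hT.2 ζ h'
  | .next _, hT, ζ, hζ => by simp [LTL.temporalFree] at hT
  | .untl _ _, hT, ζ, hζ => by simp [LTL.temporalFree] at hT

lemma propSat_congr_atoms (p : α → Bool) (σ σ' : Set α)
    (hag : ∀ a, p a = true → (a ∈ σ ↔ a ∈ σ')) :
    ∀ (ζ : LTL α), ζ.temporalFree → LTL.atomsAll p ζ →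
      (LTL.propSat σ ζ ↔ LTL.propSat σ' ζ)
  | .tt, _, _ => by simp [LTL.propSat, LTL.satAt]
  | .ff, _, _ => by simp [LTL.propSat, LTL.satAt]
  | .atom a, _, hA => by
    simp only [LTL.atomsAll] at hA
    simpa [LTL.propSat, LTL.satAt] using hag a hA
  | .not ζ, hT, hA => by
    simp only [LTL.temporalFree] at hT
    simp only [LTL.atomsAll] at hA
    simp only [LTL.propSat, LTL.satAt] at *
    rw [show LTL.satAt (fun _ => σ) 0 ζ ↔ LTL.satAt (fun _ => σ') 0 ζ from
      propSat_congr_atoms p σ σ' hag ζ hT hA]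
  | .and ζ ξ, hT, hA => by
    simp only [LTL.temporalFree, Bool.and_eq_true] at hT
    simp only [LTL.atomsAll, Bool.and_eq_true] at hA
    simp only [LTL.propSat, LTL.satAt] at *
    rw [show LTL.satAt (fun _ => σ) 0 ζ ↔ LTL.satAt (fun _ => σ') 0 ζ from
      propSat_congr_atoms p σ σ' hag ζ hT.1 hA.1,
      show LTL.satAt (fun _ => σ) 0 ξ ↔ LTL.satAt (fun _ => σ') 0 ξ from
      propSat_congr_atoms p σ σ' hag ξ hT.2 hA.2]
  | .or ζ ξ, hT, hA => by
    simp only [LTL.temporalFree, Bool.and_eq_true] at hT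
    simp only [LTL.atomsAll, Bool.and_eq_true] at hA
    simp only [LTL.propSat, LTL.satAt] at *
    rw [show LTL.satAt (fun _ => σ) 0 ζ ↔ LTL.satAt (fun _ => σ') 0 ζ from
      propSat_congr_atoms p σ σ' hag ζ hT.1 hA.1,
      show LTL.satAt (fun _ => σ) 0 ξ ↔ LTL.satAt (fun _ => σ') 0 ξ from
      propSat_congr_atoms p σ σ' hag ξ hT.2 hA.2]
  | .next _, hT, _ => by simp [LTL.temporalFree] at hT
  | .untl _ _, hT, _ => by simp [LTL.temporalFree] at hT

lemma propSat_clP (p : α → Bool) (σ σ' : Set α)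
    (hag : ∀ a, p a = false → (a ∈ σ ↔ a ∈ σ')) :
    ∀ (θ : LTL α), θ.temporalFree →
      (∀ ζ ∈ LTL.clP p θ, LTL.propSat σ ζ ↔ LTL.propSat σ' ζ) →
      (LTL.propSat σ θ ↔ LTL.propSat σ' θ)
  | .tt, _, _ => by simp [LTL.propSat, LTL.satAt]
  | .ff, _, _ => by simp [LTL.propSat, LTL.satAt]
  | .atom a, _, hcl => by
    by_cases hp : p a = true
    · exact hcl _ (by simp [LTL.clP, hp])
    · simpa [LTL.propSat, LTL.satAt] using hag a (by simpa using hp)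
  | .not θ, hT, hcl => by
    simp only [LTL.temporalFree] at hT
    by_cases hA : LTL.atomsAll p (LTL.not θ) = true
    · exact hcl _ (by simp [LTL.clP, hA])
    · have := propSat_clP p σ σ' hag θ hT
        (fun ζ hζ => hcl ζ (by simp [LTL.clP, hA]; exact hζ))
      simp only [LTL.propSat, LTL.satAt] at *
      rw [this]
  | .and θ ψ, hT, hcl => by
    simp only [LTL.temporalFree, Bool.and_eq_true] at hT
    by_cases hA : LTL.atomsAll p (LTL.and θ ψ) = true
    · exact hcl _ (by simp [LTL.clP, hA])
    · have h1 := propSat_clP p σ σ' hag θ hT.1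
        (fun ζ hζ => hcl ζ (by simp [LTL.clP, hA]; exact Or.inl hζ))
      have h2 := propSat_clP p σ σ' hag ψ hT.2
        (fun ζ hζ => hcl ζ (by simp [LTL.clP, hA]; exact Or.inr hζ))
      simp only [LTL.propSat, LTL.satAt] at *
      rw [h1, h2]
  | .or θ ψ, hT, hcl => by
    simp only [LTL.temporalFree, Bool.and_eq_true] at hT
    by_cases hA : LTL.atomsAll p (LTL.or θ ψ) = true
    · exact hcl _ (by simp [LTL.clP, hA])
    · have h1 := propSat_clP p σ σ' hag θ hT.1
        (fun ζ hζ => hcl ζ (by simp [LTL.clP, hA]; exact Or.inl hζ))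
      have h2 := propSat_clP p σ σ' hag ψ hT.2
        (fun ζ hζ => hcl ζ (by simp [LTL.clP, hA]; exact Or.inr hζ))
      simp only [LTL.propSat, LTL.satAt] at *
      rw [h1, h2]
  | .next _, hT, _ => by simp [LTL.temporalFree] at hT
  | .untl _ _, hT, _ => by simp [LTL.temporalFree] at hT

lemma satAt_congr_props (w w' : ℕ → Set α) :
    ∀ (φ : LTL α),
      (∀ j, ∀ θ ∈ φ.props, (LTL.propSat (w j) θ ↔ LTL.propSat (w' j) θ)) →
      ∀ j, (LTL.satAt w j φ ↔ LTL.satAt w' j φ)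
  | .tt, _, _ => by simp [LTL.satAt]
  | .ff, _, _ => by simp [LTL.satAt]
  | .atom a, hp, j => by
    simpa [LTL.satAt, LTL.propSat] using hp j (LTL.atom a) (by simp [LTL.props])
  | .not φ, hp, j => by
    by_cases hT : LTL.temporalFree (LTL.not φ) = true
    · rw [satAt_of_temporalFree w _ hT j, satAt_of_temporalFree w' _ hT j]
      exact hp j _ (by simp [LTL.props, hT])
    · have := satAt_congr_props w w' φ
        (fun j θ hθ => hp j θ (by simp only [LTL.props, hT, if_false]; exact hθ)) j
      simp only [LTL.satAt]
      rw [this]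
  | .and φ ψ, hp, j => by
    by_cases hT : LTL.temporalFree (LTL.and φ ψ) = true
    · rw [satAt_of_temporalFree w _ hT j, satAt_of_temporalFree w' _ hT j]
      exact hp j _ (by simp [LTL.props, hT])
    · have h1 := satAt_congr_props w w' φ
        (fun j θ hθ => hp j θ (by
          simp only [LTL.props, hT, if_false]; exact List.mem_append.2 (Or.inl hθ))) j
      have h2 := satAt_congr_props w w' ψ
        (fun j θ hθ => hp j θ (by
          simp only [LTL.props, hT, if_false]; exact List.mem_append.2 (Or.inr hθ))) j
      simp only [LTL.satAt]
      rw [h1, h2]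
  | .or φ ψ, hp, j => by
    by_cases hT : LTL.temporalFree (LTL.or φ ψ) = true
    · rw [satAt_of_temporalFree w _ hT j, satAt_of_temporalFree w' _ hT j]
      exact hp j _ (by simp [LTL.props, hT])
    · have h1 := satAt_congr_props w w' φ
        (fun j θ hθ => hp j θ (by
          simp only [LTL.props, hT, if_false]; exact List.mem_append.2 (Or.inl hθ))) j
      have h2 := satAt_congr_props w w' ψ
        (fun j θ hθ => hp j θ (by
          simp only [LTL.props, hT, if_false]; exact List.mem_append.2 (Or.inr hθ))) j
      simp only [LTL.satAt]
      rw [h1, h2]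
  | .next φ, hp, j => by
    have := satAt_congr_props w w' φ (fun j θ hθ => hp j θ hθ) (j+1)
    simp only [LTL.satAt]
    rw [this]
  | .untl φ ψ, hp, j => by
    have h1 := satAt_congr_props w w' φ
      (fun j θ hθ => hp j θ (List.mem_append.2 (Or.inl hθ)))
    have h2 := satAt_congr_props w w' ψ
      (fun j θ hθ => hp j θ (List.mem_append.2 (Or.inr hθ)))
    simp only [LTL.satAt]
    constructor
    · rintro ⟨k, hk, hψ, hφ⟩
      exact ⟨k, hk, (h2 k).1 hψ, fun l h1' h2' => (h1 l).1 (hφ l h1' h2')⟩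
    · rintro ⟨k, hk, hψ, hφ⟩
      exact ⟨k, hk, (h2 k).2 hψ, fun l h1' h2' => (h1 l).2 (hφ l h1' h2')⟩

lemma mem_foldr_clP {p : α → Bool} {ζ : LTL α} :
    ∀ (l : List (LTL α)), (∃ ψ ∈ l, ζ ∈ LTL.clP p ψ) →
      ζ ∈ l.foldr (fun ψ acc => LTL.clP p ψ ++ acc) []
  | [], h => by simp at h
  | ψ :: l, h => by
    rcases h with ⟨ξ, hξ, hζ⟩
    rcases List.mem_cons.1 hξ with rfl | h'
    · exact List.mem_append.2 (Or.inl hζ)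
    · exact List.mem_append.2 (Or.inr (mem_foldr_clP l ⟨ξ, h', hζ⟩))

lemma mem_clH {p : α → Bool} {φ θ ζ : LTL α}
    (hθ : θ ∈ φ.props) (hζ : ζ ∈ LTL.clP p θ) : ζ ∈ LTL.clH p φ :=
  mem_foldr_clP _ ⟨θ, hθ, hζ⟩

end Aux

/-- If `φ` is `(V,H,C,G)`-realizable by a TGE, then it is
realizable (same state space and memory) by a TGE all of whose programs are
tight for `φ`: the program's value at `(m,h)` only depends on which formulas of
`cl_H(φ)` the hidden assignment `h` satisfies. -/
theorem stmt8 {ν η γc γg S M : Type} (φ : LTL ((ν ⊕ η) ⊕ (γc ⊕ γg)))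
    (T : TGE ν η γc γg S M) (h : T.Realizes φ) :
    ∃ T' : TGE ν η γc γg S M, T'.Realizes φ ∧
      ∀ s v m (h₁ h₂ : Set η),
        (∀ θ ∈ LTL.clH isHidden φ,
            LTL.propSat (hLetter (ν := ν) (γc := γc) (γg := γg) h₁) θ ↔
            LTL.propSat (hLetter (ν := ν) (γc := γc) (γg := γg) h₂) θ) →
        (T'.out s v).2 m h₁ = (T'.out s v).2 m h₂ := by
  classical
  -- the equivalence relation on hidden assignments
  set R : Set η → Set η → Prop := fun h₁ h₂ =>
    ∀ θ ∈ LTL.clH isHidden φ,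
      LTL.propSat (hLetter (ν := ν) (γc := γc) (γg := γg) h₁) θ ↔
      LTL.propSat (hLetter (ν := ν) (γc := γc) (γg := γg) h₂) θ with hR
  have hrefl : ∀ x, R x x := fun x θ _ => Iff.rfl
  have hsymm : ∀ {x y}, R x y → R y x := fun hxy θ hθ => (hxy θ hθ).symm
  have htrans : ∀ {x y z}, R x y → R y z → R x z :=
    fun hxy hyz θ hθ => (hxy θ hθ).trans (hyz θ hθ)
  -- canonical representatives
  let rep : Set η → Set η := fun x => Classical.epsilon (fun y => R y x)
  have hrep_rel : ∀ x, R (rep x) x :=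
    fun x => Classical.epsilon_spec (p := fun y => R y x) ⟨x, hrefl x⟩
  have hrep_eq : ∀ x y, R x y → rep x = rep y := by
    intro x y hxy
    show Classical.epsilon _ = Classical.epsilon _
    congr 1
    funext z
    exact propext ⟨fun h' => htrans h' hxy, fun h' => htrans h' (hsymm hxy)⟩
  -- the tight TGE
  let T' : TGE ν η γc γg S M :=
    { init := T.init, m0 := T.m0, trans := T.trans,
      out := fun st v => ((T.out st v).1, fun m hh => (T.out st v).2 m (rep hh)) }
  refine ⟨T', ?_, ?_⟩
  · -- realizability
    intro wV wH
    set wH' : ℕ → Set η := fun j => rep (wH j) with hwH'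
    have hrun : ∀ j, T'.run wV j = T.run wV j := by
      intro j; induction j with
      | zero => rfl
      | succ j ih => simp [TGE.run, ih]; rfl
    have hmem : ∀ j, T'.mem wV wH j = T.mem wV wH' j := by
      intro j; induction j with
      | zero => rfl
      | succ j ih => simp [TGE.mem, ih, hrun j]; rfl
    have hguided : ∀ j, T'.guided wV wH j = T.guided wV wH' j := by
      intro j
      simp [TGE.guided, hrun j, hmem j]; rfl
    have houtc : ∀ st v, (T'.out st v).1 = (T.out st v).1 := fun _ _ => rfl
    -- membership facts about the two computations
    have hσH : ∀ j (e : η),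
        (Sum.inl (Sum.inr e) ∈ T'.comp wV wH j ↔ e ∈ wH j) ∧
        (Sum.inl (Sum.inr e) ∈ T.comp wV wH' j ↔ e ∈ wH' j) := by
      intro j e
      constructor <;> simp [TGE.comp]
    have hA : ∀ j a, isHidden a = false →
        (a ∈ T'.comp wV wH j ↔ a ∈ T.comp wV wH' j) := by
      intro j a ha
      rcases a with (x | e) | (c | g)
      · simp [TGE.comp]
      · simp [isHidden] at ha
      · simp [TGE.comp, hrun j]; rfl
      · simp [TGE.comp, hguided j]
    have hprops : ∀ j, ∀ θ ∈ φ.props,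
        (LTL.propSat (T'.comp wV wH j) θ ↔ LTL.propSat (T.comp wV wH' j) θ) := by
      intro j θ hθ
      have hT : θ.temporalFree := props_temporalFree φ θ hθ
      refine propSat_clP isHidden _ _ (hA j) θ hT ?_
      intro ζ hζ
      obtain ⟨hζT, hζA⟩ := clP_spec isHidden θ hT ζ hζ
      have e1 : LTL.propSat (T'.comp wV wH j) ζ ↔
          LTL.propSat (hLetter (ν := ν) (γc := γc) (γg := γg) (wH j)) ζ := by
        refine propSat_congr_atoms isHidden _ _ ?_ ζ hζT hζA
        intro a ha
        rcases a with (x | e) | (c | g) <;> simp [isHidden] at ha ⊢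
        rw [(hσH j e).1]; simp [hLetter]
      have e2 : LTL.propSat (T.comp wV wH' j) ζ ↔
          LTL.propSat (hLetter (ν := ν) (γc := γc) (γg := γg) (wH' j)) ζ := by
        refine propSat_congr_atoms isHidden _ _ ?_ ζ hζT hζA
        intro a ha
        rcases a with (x | e) | (c | g) <;> simp [isHidden] at ha ⊢
        rw [(hσH j e).2]; simp [hLetter]
      have e3 : LTL.propSat (hLetter (ν := ν) (γc := γc) (γg := γg) (wH j)) ζ ↔
          LTL.propSat (hLetter (ν := ν) (γc := γc) (γg := γg) (wH' j)) ζ :=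
        (hrep_rel (wH j) ζ (mem_clH hθ hζ)).symm
      rw [e1, e3, e2]
    have key := satAt_congr_props (T'.comp wV wH) (T.comp wV wH') φ hprops 0
    exact key.2 (h wV wH')
  · -- tightness
    intro s v m h₁ h₂ heq
    show (T.out s v).2 m (rep h₁) = (T.out s v).2 m (rep h₂)
    rw [hrep_eq h₁ h₂ heq]
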